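/- Let P be a polynomial of degree 2N-2 with conjugate-symmetric coefficients (a[-n] = conj(a[n])) such that P(e^{-iω}) e^{iω(N-1)} ≥ 0 for all real ω. Then every zero of P on the unit circle has even multiplicity. -/

import Mathlib

open Complex Polynomial Filter Topology

theorem unit_circle_roots_even_multiplicity
    (N : ℕ) (hN : 1 ≤ N) (a : ℤ → ℂ)
    (hsymm : ∀ n : ℤ, a (-n) = (starRingEnd ℂ) (a n))
    (hlead : a ((N : ℤ) - 1) ≠ 0)
    (P : Polynomial ℂ)
    (hP : P = ∑ n ∈ Finset.range (2 * N - 1),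
      Polynomial.C (a ((n : ℤ) - (N : ℤ) + 1)) * Polynomial.X ^ n)
    (hpos : ∀ ω : ℝ,
      (Complex.exp (Complex.I * (ω : ℂ) * ((N : ℂ) - 1)) *
        P.eval (Complex.exp (-Complex.I * (ω : ℂ)))).im = 0 ∧
      0 ≤ (Complex.exp (Complex.I * (ω : ℂ) * ((N : ℂ) - 1)) *
        P.eval (Complex.exp (-Complex.I * (ω : ℂ)))).re) :
    ∀ γ : ℂ, ‖γ‖ = 1 → Even (P.rootMultiplicity γ) := by
  intro γ hγ
  -- P ≠ 0
  have hc : P.coeff (2 * N - 2) = a ((N : ℤ) - 1) := by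
    have h2 : (2 * N - 2) ∈ Finset.range (2 * N - 1) := by
      rw [Finset.mem_range]; omega
    rw [hP, Polynomial.finset_sum_coeff, Finset.sum_eq_single (2 * N - 2)]
    · rw [Polynomial.coeff_C_mul, Polynomial.coeff_X_pow, if_pos rfl, mul_one]
      congr 1
      push_cast [Nat.cast_sub (show 2 ≤ 2 * N by omega)]
      omega
    · intro b _ hb
      rw [Polynomial.coeff_C_mul, Polynomial.coeff_X_pow, if_neg (fun h => hb h.symm), mul_zero]
    · intro h; exact absurd h2 h
  have hPne : P ≠ 0 := fun h0 => hlead (by rw [h0] at hc; simpa using hc.symm)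
  set m := P.rootMultiplicity γ with hm
  set Q := P /ₘ (X - C γ) ^ m with hQ
  have hfact : (X - C γ) ^ m * Q = P := P.pow_mul_divByMonic_rootMultiplicity_eq γ
  have hQγ : Q.eval γ ≠ 0 := Polynomial.eval_divByMonic_pow_rootMultiplicity_ne_zero γ hPne
  have hγne : γ ≠ 0 := by
    intro h; rw [h] at hγ; simp at hγ
  by_contra hodd
  rw [Nat.not_even_iff_odd] at hodd
  set ω0 : ℝ := -γ.arg with hω0
  set f : ℝ → ℂ := fun ω => Complex.exp (-Complex.I * (ω : ℂ)) with hf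
  have hγ0 : f ω0 = γ := by
    have h := Complex.norm_mul_exp_arg_mul_I γ
    rw [hγ] at h
    simp only [hf, hω0]
    push_cast
    rw [show -Complex.I * -(γ.arg : ℂ) = (γ.arg : ℂ) * Complex.I by ring]
    simpa using h
  set F : ℝ → ℂ := fun ω => Complex.exp (Complex.I * (ω : ℂ) * ((N : ℂ) - 1)) * P.eval (f ω)
    with hF
  -- slope limit
  have hder : HasDerivAt f (γ * -Complex.I) ω0 := by
    have h1 : HasDerivAt (fun t : ℝ => (-Complex.I * (t : ℂ))) (-Complex.I) ω0 := by
      simpa using (Complex.ofRealCLM.hasDerivAt (x := ω0)).const_mul (-Complex.I)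
    have h2 : HasDerivAt f (f ω0 * -Complex.I) ω0 := h1.cexp
    rw [hγ0] at h2
    exact h2
  have hslope : Tendsto (slope f ω0) (𝓝[≠] ω0) (𝓝 (γ * -Complex.I)) :=
    hasDerivAt_iff_tendsto_slope.mp hder
  set G : ℝ → ℂ := fun ω =>
    Complex.exp (Complex.I * (ω : ℂ) * ((N : ℂ) - 1)) * (slope f ω0 ω) ^ m * Q.eval (f ω)
    with hG
  set c : ℂ :=
    Complex.exp (Complex.I * (ω0 : ℂ) * ((N : ℂ) - 1)) * (γ * -Complex.I) ^ m * Q.eval γ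
    with hcd
  have hcne : c ≠ 0 :=
    mul_ne_zero (mul_ne_zero (Complex.exp_ne_zero _)
      (pow_ne_zero _ (mul_ne_zero hγne (neg_ne_zero.mpr Complex.I_ne_zero)))) hQγ
  have hGtend : Tendsto G (𝓝[≠] ω0) (𝓝 c) := by
    have h1 : Continuous fun ω : ℝ => Complex.exp (Complex.I * (ω : ℂ) * ((N : ℂ) - 1)) := by
      fun_prop
    have h3 : Continuous fun ω : ℝ => Q.eval (f ω) := by
      apply (Polynomial.continuous Q).comp
      fun_prop
    have := ((h1.tendsto ω0).mono_left nhdsWithin_le_nhds).mul (hslope.pow m)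
    have h4 := this.mul ((h3.tendsto ω0).mono_left nhdsWithin_le_nhds)
    rw [hγ0] at h4
    exact h4
  -- real function
  set r : ℝ → ℝ := fun ω => (F ω).re * ((ω - ω0) ^ m)⁻¹ with hr
  have hGr : ∀ ω : ℝ, G ω = ((r ω : ℝ) : ℂ) := by
    intro ω
    have hFre : F ω = (((F ω).re : ℝ) : ℂ) := by
      have h0 : (F ω).im = 0 := (hpos ω).1
      exact Complex.ext (by simp) (by simp [h0])
    have hPev : P.eval (f ω) = (f ω - γ) ^ m * Q.eval (f ω) := by
      conv_lhs => rw [← hfact]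
      simp
    have hsl : slope f ω0 ω = (ω - ω0)⁻¹ • (f ω - γ) := by
      rw [slope_def_module, hγ0]
    calc G ω = Complex.exp (Complex.I * (ω : ℂ) * ((N : ℂ) - 1)) *
        ((ω - ω0)⁻¹ • (f ω - γ)) ^ m * Q.eval (f ω) := by simp only [hG, hsl]
      _ = Complex.exp (Complex.I * (ω : ℂ) * ((N : ℂ) - 1)) *
        (((ω - ω0 : ℝ) : ℂ)⁻¹) ^ m * ((f ω - γ) ^ m * Q.eval (f ω)) := by
          rw [_root_.smul_pow, Complex.real_smul]
          push_cast
          ring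
      _ = (((ω - ω0 : ℝ) : ℂ)⁻¹) ^ m * F ω := by
          simp only [hF, hPev]
          ring
      _ = ((r ω : ℝ) : ℂ) := by
          simp only [hr]
          rw [hFre]
          simp only [Complex.ofReal_re]
          push_cast
          ring
  have hrtend : Tendsto r (𝓝[≠] ω0) (𝓝 c.re) := by
    have := (Complex.continuous_re.tendsto c).comp hGtend
    refine this.congr fun ω => ?_
    rw [Function.comp_apply, hGr ω, Complex.ofReal_re]
  have him : c.im = 0 := by
    have h1 : Tendsto (fun ω => (G ω).im) (𝓝[≠] ω0) (𝓝 c.im) :=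
      (Complex.continuous_im.tendsto c).comp hGtend
    have h2 : Tendsto (fun ω : ℝ => (G ω).im) (𝓝[≠] ω0) (𝓝 0) := by
      refine tendsto_const_nhds.congr fun ω => ?_
      rw [hGr ω, Complex.ofReal_im]
    exact tendsto_nhds_unique h1 h2
  have hre0 : 0 ≤ c.re := by
    have hright : Tendsto r (𝓝[>] ω0) (𝓝 c.re) :=
      hrtend.mono_left (nhdsWithin_mono _ fun x hx => ne_of_gt hx)
    refine ge_of_tendsto hright ?_
    filter_upwards [self_mem_nhdsWithin] with ω hω
    have h1 : 0 < (ω - ω0) ^ m := pow_pos (sub_pos.mpr hω) m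
    exact mul_nonneg (hpos ω).2 (le_of_lt (inv_pos.mpr h1))
  have hre0' : c.re ≤ 0 := by
    have hleft : Tendsto r (𝓝[<] ω0) (𝓝 c.re) :=
      hrtend.mono_left (nhdsWithin_mono _ fun x hx => ne_of_lt hx)
    refine le_of_tendsto hleft ?_
    filter_upwards [self_mem_nhdsWithin] with ω hω
    have h1 : (ω - ω0) ^ m < 0 := hodd.pow_neg (sub_neg.mpr hω)
    exact mul_nonpos_of_nonneg_of_nonpos (hpos ω).2 (le_of_lt (inv_neg''.mpr h1))
  exact hcne (Complex.ext (le_antisymm hre0' hre0) (by simpa using him))
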